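/- Let M be a valuated matroid of rank r on a finite set E and 0 ≤ ρ ≤ r. Then the restriction of the independent-set extension ν̃_M to binom(E, ρ) defines a valuated matroid M_ρ of rank ρ on E (i.e., it satisfies the valuated symmetric basis exchange property for ρ-element subsets). -/

import Mathlib

open Finset
open scoped Classical

noncomputable section

/-- The valuated symmetric basis exchange property for a map on `r`-element subsets. -/
def ExchProp {E Γ : Type*} [AddCommGroup Γ] [LinearOrder Γ] [IsOrderedAddMonoid Γ]
    (r : ℕ) (ν : Finset E → WithTop Γ) : Prop :=
  ∀ S T : Finset E, S.card = r → T.card = r → ∀ s ∈ S, s ∉ T →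
    ∃ t ∈ T, t ∉ S ∧
      ν (insert t (S.erase s)) + ν (insert s (T.erase t)) ≤ ν S + ν T

/-- A valuated matroid of rank `r`: not identically `∞` on `r`-sets, and the
valuated basis exchange property. -/
def IsVMatroid {E Γ : Type*} [AddCommGroup Γ] [LinearOrder Γ] [IsOrderedAddMonoid Γ]
    (r : ℕ) (ν : Finset E → WithTop Γ) : Prop :=
  (∃ B : Finset E, B.card = r ∧ ν B ≠ ⊤) ∧ ExchProp r ν

/-- The independent-set extension `ν̃(S) = min {ν B : S ⊆ B, |B| = r}`. -/
def extν {E Γ : Type*} [Fintype E] [AddCommGroup Γ] [LinearOrder Γ] [IsOrderedAddMonoid Γ]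
    (r : ℕ) (ν : Finset E → WithTop Γ) (S : Finset E) : WithTop Γ :=
  ((Finset.univ.powersetCard r).filter (fun B => S ⊆ B)).inf ν

section Aux

variable {E Γ : Type*} [Fintype E] [AddCommGroup Γ] [LinearOrder Γ] [IsOrderedAddMonoid Γ]

lemma card_exch {A : Finset E} {a b : E} (ha : a ∈ A) (hb : b ∉ A) :
    (insert b (A.erase a)).card = A.card := by
  rw [Finset.card_insert_of_notMem (fun h => hb (Finset.mem_of_mem_erase h)),
    Finset.card_erase_of_mem ha]
  have : 1 ≤ A.card := Finset.card_pos.mpr ⟨a, ha⟩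
  omega

lemma extν_le {r : ℕ} {ν : Finset E → WithTop Γ} {S B : Finset E}
    (hB : B.card = r) (hSB : S ⊆ B) : extν r ν S ≤ ν B := by
  unfold extν
  apply Finset.inf_le
  rw [Finset.mem_filter, Finset.mem_powersetCard]
  exact ⟨⟨Finset.subset_univ B, hB⟩, hSB⟩

lemma extν_mono {r : ℕ} {ν : Finset E → WithTop Γ} {S S' : Finset E} (h : S ⊆ S') :
    extν r ν S ≤ extν r ν S' := by
  unfold extν
  apply Finset.le_inf
  intro B hB
  rw [Finset.mem_filter, Finset.mem_powersetCard] at hB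
  apply Finset.inf_le
  rw [Finset.mem_filter, Finset.mem_powersetCard]
  exact ⟨hB.1, h.trans hB.2⟩

lemma extν_eq {r : ℕ} (ν : Finset E → WithTop Γ) {S : Finset E} (hS : S.card = r) :
    extν r ν S = ν S := by
  apply le_antisymm
  · exact extν_le hS (Finset.Subset.refl S)
  · unfold extν
    apply Finset.le_inf
    intro B hB
    rw [Finset.mem_filter, Finset.mem_powersetCard] at hB
    rw [Finset.eq_of_subset_of_card_le hB.2 (by rw [hB.1.2, hS])]

lemma extν_step {r ρ : ℕ} (ν : Finset E → WithTop Γ) {S : Finset E}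
    (hS : S.card = ρ) (hρr : ρ < r) :
    extν r ν S = (univ.filter (fun x => x ∉ S)).inf (fun x => extν r ν (insert x S)) := by
  apply le_antisymm
  · apply Finset.le_inf
    intro x _
    exact extν_mono (Finset.subset_insert x S)
  · conv_rhs => rw [extν]
    apply Finset.le_inf
    intro B hB
    rw [Finset.mem_filter, Finset.mem_powersetCard] at hB
    have hne : ¬ B ⊆ S := by
      intro h
      have := Finset.card_le_card h
      omega
    obtain ⟨x, hxB, hxS⟩ := Finset.not_subset.mp hne
    calc (univ.filter (fun x => x ∉ S)).inf (fun x => extν r ν (insert x S))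
        ≤ extν r ν (insert x S) := Finset.inf_le (by simp [hxS])
      _ ≤ ν B := extν_le hB.1.2 (Finset.insert_subset hxB hB.2)

lemma one_step {k : ℕ} {f g : Finset E → WithTop Γ}
    (hf : ExchProp (k + 1) f)
    (hg : ∀ S : Finset E, S.card = k →
      g S = (univ.filter (fun x => x ∉ S)).inf (fun x => f (insert x S))) :
    ExchProp k g := by
  intro S T hS hT s hsS hsT
  have hF1 : ∀ A : Finset E, A.card = k → ∀ z ∉ A, g A ≤ f (insert z A) := by
    intro A hA z hz
    rw [hg A hA]
    exact Finset.inf_le (by simp [hz])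
  have hF2 : ∀ A : Finset E, A.card = k → g A ≠ ⊤ → ∃ z, z ∉ A ∧ f (insert z A) = g A := by
    intro A hA htop
    rw [hg A hA] at htop ⊢
    have hne : (univ.filter (fun x => x ∉ A)).Nonempty := by
      by_contra h
      rw [Finset.not_nonempty_iff_eq_empty] at h
      rw [h] at htop
      simp at htop
    obtain ⟨z, hz, hz2⟩ := Finset.exists_mem_eq_inf _ hne (fun x => f (insert x A))
    exact ⟨z, by simpa using hz, hz2.symm⟩
  have hTS : ∃ t ∈ T, t ∉ S := by
    by_contra h
    push_neg at h
    have hTSeq : T = S := Finset.eq_of_subset_of_card_le h (by omega)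
    exact hsT (hTSeq ▸ hsS)
  by_cases htop : g S = ⊤ ∨ g T = ⊤
  · obtain ⟨t, htT, htS⟩ := hTS
    refine ⟨t, htT, htS, ?_⟩
    rcases htop with h | h <;> simp [h]
  push_neg at htop
  obtain ⟨hStop, hTtop⟩ := htop
  obtain ⟨x, hx, hfx⟩ := hF2 S hS hStop
  obtain ⟨y, hy, hfy⟩ := hF2 T hT hTtop
  have hxs : x ≠ s := fun h => hx (h ▸ hsS)
  have conclude : ∀ t a b : E, t ∈ T → t ∉ S → a ∉ insert t (S.erase s) →
      b ∉ insert s (T.erase t) →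
      f (insert a (insert t (S.erase s))) + f (insert b (insert s (T.erase t))) ≤ g S + g T →
      ∃ t' ∈ T, t' ∉ S ∧ g (insert t' (S.erase s)) + g (insert s (T.erase t')) ≤ g S + g T := by
    intro t a b htT htS ha hb hsum
    refine ⟨t, htT, htS, le_trans (add_le_add (hF1 _ ?_ a ha) (hF1 _ ?_ b hb)) hsum⟩
    · rw [card_exch hsS htS, hS]
    · rw [card_exch htT hsT, hT]
  have hcardSx : (insert x S).card = k + 1 := by
    rw [Finset.card_insert_of_notMem hx, hS]
  have hcardTs : (insert s T).card = k + 1 := by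
    rw [Finset.card_insert_of_notMem hsT, hT]
  by_cases hys : y = s
  · rw [hys] at hfy hy
    by_cases hxT : x ∈ T
    · have e1 : insert s (insert x (S.erase s)) = insert x S := by
        rw [Finset.insert_comm, Finset.insert_erase hsS]
      have e2 : insert x (insert s (T.erase x)) = insert s T := by
        rw [Finset.insert_comm, Finset.insert_erase hxT]
      refine conclude x s x hxT hx ?_ ?_ ?_
      · simp [Ne.symm hxs]
      · simp [hxs]
      · rw [e1, e2, hfx, hfy]
    · have hxB : x ∈ insert x S := Finset.mem_insert_self x S
      have hxD : x ∉ insert s T := by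
        simp only [Finset.mem_insert]
        push_neg
        exact ⟨hxs, hxT⟩
      obtain ⟨w, hwD, hwB, hwsum⟩ := hf (insert x S) (insert s T) hcardSx hcardTs x hxB hxD
      have hws : w ≠ s := fun h => hwB (h ▸ Finset.mem_insert_of_mem hsS)
      have hwT : w ∈ T := by
        rcases Finset.mem_insert.mp hwD with h | h
        · exact absurd h hws
        · exact h
      have hwS : w ∉ S := fun h => hwB (Finset.mem_insert_of_mem h)
      have e1 : (insert x S).erase x = S := Finset.erase_insert hx
      have e2 : (insert s T).erase w = insert s (T.erase w) :=
        Finset.erase_insert_of_ne (Ne.symm hws)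
      rw [e1, e2, hfx, hfy] at hwsum
      have e3 : insert s (insert w (S.erase s)) = insert w S := by
        rw [Finset.insert_comm, Finset.insert_erase hsS]
      refine conclude w s x hwT hwS ?_ ?_ ?_
      · simp [Ne.symm hws]
      · simp only [Finset.mem_insert, Finset.mem_erase]
        push_neg
        exact ⟨hxs, fun _ => hxT⟩
      · rw [e3]
        exact hwsum
  · -- y ≠ s
    have hcardTy : (insert y T).card = k + 1 := by
      rw [Finset.card_insert_of_notMem hy, hT]
    have hsB : s ∈ insert x S := Finset.mem_insert_of_mem hsS
    have hsB' : s ∉ insert y T := by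
      simp only [Finset.mem_insert]
      push_neg
      exact ⟨fun h => hys h.symm, hsT⟩
    obtain ⟨v, hvB', hvB, hvsum⟩ := hf (insert x S) (insert y T) hcardSx hcardTy s hsB hsB'
    have hvS : v ∉ S := fun h => hvB (Finset.mem_insert_of_mem h)
    have hvx : v ≠ x := fun h => hvB (h ▸ Finset.mem_insert_self x S)
    have eB : (insert x S).erase s = insert x (S.erase s) := Finset.erase_insert_of_ne hxs
    by_cases hvy : v = y
    · rw [hvy] at hvsum hvS hvx
      -- now hvS : y ∉ S, hvx : y ≠ x
      have eT : (insert y T).erase y = T := Finset.erase_insert hy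
      rw [eB, eT, hfx, hfy] at hvsum
      -- hvsum : f (insert y (insert x (S.erase s))) + f (insert s T) ≤ g S + g T
      by_cases hxT : x ∈ T
      · have e2 : insert x (insert s (T.erase x)) = insert s T := by
          rw [Finset.insert_comm, Finset.insert_erase hxT]
        refine conclude x y x hxT hx ?_ ?_ ?_
        · simp only [Finset.mem_insert, Finset.mem_erase]
          push_neg
          exact ⟨hvx, fun _ => hvS⟩
        · simp [hxs]
        · rw [e2]
          exact hvsum
      · have hxC : x ∈ insert y (insert x (S.erase s)) :=
          Finset.mem_insert_of_mem (Finset.mem_insert_self x _)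
        have hxD : x ∉ insert s T := by
          simp only [Finset.mem_insert]
          push_neg
          exact ⟨hxs, hxT⟩
        have hyxS : y ∉ insert x (S.erase s) := by
          simp only [Finset.mem_insert, Finset.mem_erase]
          push_neg
          exact ⟨hvx, fun _ => hvS⟩
        have hxSe : x ∉ S.erase s := fun h => hx (Finset.mem_of_mem_erase h)
        have hk1 : 1 ≤ k := hS ▸ Finset.card_pos.mpr ⟨s, hsS⟩
        have hcardC : (insert y (insert x (S.erase s))).card = k + 1 := by
          rw [Finset.card_insert_of_notMem hyxS, Finset.card_insert_of_notMem hxSe,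
            Finset.card_erase_of_mem hsS, hS]
          omega
        obtain ⟨w, hwD, hwC, hwsum⟩ :=
          hf (insert y (insert x (S.erase s))) (insert s T) hcardC hcardTs x hxC hxD
        have hxyS : x ∉ insert y (S.erase s) := by
          simp only [Finset.mem_insert]
          push_neg
          exact ⟨Ne.symm hvx, hxSe⟩
        have eC : (insert y (insert x (S.erase s))).erase x = insert y (S.erase s) := by
          rw [Finset.insert_comm, Finset.erase_insert hxyS]
        by_cases hws : w = s
        · rw [hws] at hwsum
          have eD : (insert s T).erase s = T := Finset.erase_insert hsT
          have e5 : insert s (insert y (S.erase s)) = insert y S := by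
            rw [Finset.insert_comm, Finset.insert_erase hsS]
          rw [eC, eD, e5] at hwsum
          -- hwsum : f (insert y S) + f (insert x T) ≤ f C + f (insert s T)
          have hchain : f (insert y S) + f (insert x T) ≤ g S + g T := le_trans hwsum hvsum
          have h2 : g S ≤ f (insert y S) := hF1 S hS y hvS
          have h3 : f (insert x T) ≤ g T := by
            have h4 : g S + f (insert x T) ≤ g S + g T :=
              le_trans (add_le_add_left h2 (f (insert x T))) hchain
            exact (WithTop.add_le_add_iff_left hStop).mp h4
          have hcardTx : (insert x T).card = k + 1 := by
            rw [Finset.card_insert_of_notMem hxT, hT]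
          have hsB2 : s ∉ insert x T := by
            simp only [Finset.mem_insert]
            push_neg
            exact ⟨fun h => hxs h.symm, hsT⟩
          obtain ⟨v', hv'D, hv'B, hv'sum⟩ :=
            hf (insert x S) (insert x T) hcardSx hcardTx s hsB hsB2
          have hv'x : v' ≠ x := fun h => hv'B (h ▸ Finset.mem_insert_self x S)
          have hv'T : v' ∈ T := by
            rcases Finset.mem_insert.mp hv'D with h | h
            · exact absurd h hv'x
            · exact h
          have hv'S : v' ∉ S := fun h => hv'B (Finset.mem_insert_of_mem h)
          have eTx : (insert x T).erase v' = insert x (T.erase v') :=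
            Finset.erase_insert_of_ne (Ne.symm hv'x)
          rw [eB, eTx] at hv'sum
          have e6 : insert v' (insert x (S.erase s)) = insert x (insert v' (S.erase s)) :=
            Finset.insert_comm _ _ _
          have e7 : insert x (insert s (T.erase v')) = insert s (insert x (T.erase v')) :=
            Finset.insert_comm _ _ _
          rw [e6, ← e7] at hv'sum
          refine conclude v' x x hv'T hv'S ?_ ?_ ?_
          · simp only [Finset.mem_insert, Finset.mem_erase]
            push_neg
            exact ⟨Ne.symm hv'x, fun _ => hx⟩
          · simp only [Finset.mem_insert, Finset.mem_erase]
            push_neg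
            exact ⟨hxs, fun _ => hxT⟩
          · refine le_trans hv'sum ?_
            rw [hfx]
            exact add_le_add_right h3 _
        · have hwT : w ∈ T := by
            rcases Finset.mem_insert.mp hwD with h | h
            · exact absurd h hws
            · exact h
          have hwy : w ≠ y := fun h => hwC (by rw [h]; exact Finset.mem_insert_self y _)
          have hwS : w ∉ S := by
            intro h
            exact hwC (Finset.mem_insert_of_mem (Finset.mem_insert_of_mem
              (Finset.mem_erase.mpr ⟨hws, h⟩)))
          have eD2 : (insert s T).erase w = insert s (T.erase w) :=
            Finset.erase_insert_of_ne (Ne.symm hws)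
          rw [eC, eD2] at hwsum
          have e6 : insert w (insert y (S.erase s)) = insert y (insert w (S.erase s)) :=
            Finset.insert_comm _ _ _
          rw [e6] at hwsum
          refine conclude w y x hwT hwS ?_ ?_ (le_trans hwsum hvsum)
          · simp only [Finset.mem_insert, Finset.mem_erase]
            push_neg
            exact ⟨Ne.symm hwy, fun _ => hvS⟩
          · simp only [Finset.mem_insert, Finset.mem_erase]
            push_neg
            exact ⟨hxs, fun _ => hxT⟩
    · -- v ≠ y : direct
      have hvT : v ∈ T := by
        rcases Finset.mem_insert.mp hvB' with h | h
        · exact absurd h hvy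
        · exact h
      have eT2 : (insert y T).erase v = insert y (T.erase v) :=
        Finset.erase_insert_of_ne (Ne.symm hvy)
      rw [eB, eT2, hfx, hfy] at hvsum
      have e7 : insert s (insert y (T.erase v)) = insert y (insert s (T.erase v)) :=
        Finset.insert_comm _ _ _
      have e8 : insert v (insert x (S.erase s)) = insert x (insert v (S.erase s)) :=
        Finset.insert_comm _ _ _
      rw [e7, e8] at hvsum
      refine conclude v x y hvT hvS ?_ ?_ hvsum
      · simp only [Finset.mem_insert, Finset.mem_erase]
        push_neg
        exact ⟨Ne.symm hvx, fun _ => hx⟩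
      · simp only [Finset.mem_insert, Finset.mem_erase]
        push_neg
        exact ⟨hys, fun _ => hy⟩

lemma exch_extν {r : ℕ} {ν : Finset E → WithTop Γ} (hex : ExchProp r ν) :
    ∀ d ρ : ℕ, ρ + d = r → ExchProp ρ (extν r ν) := by
  intro d
  induction d with
  | zero =>
    intro ρ hρ
    have hρr : ρ = r := by omega
    subst hρr
    intro S T hS hT s hsS hsT
    obtain ⟨t, h1, h2, h3⟩ := hex S T hS hT s hsS hsT
    refine ⟨t, h1, h2, ?_⟩
    rw [extν_eq ν hS, extν_eq ν hT, extν_eq ν (by rw [card_exch hsS h2, hS]),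
      extν_eq ν (by rw [card_exch h1 hsT, hT])]
    exact h3
  | succ d ih =>
    intro ρ hρ
    have ih' : ExchProp (ρ + 1) (extν r ν) := ih (ρ + 1) (by omega)
    exact one_step ih' (fun S hS => extν_step ν hS (by omega))

end Aux

/-- for every `0 ≤ ρ ≤ r`, the restriction of the independent-set extension
`ν̃` to `ρ`-element subsets is a valuated matroid of rank `ρ`. -/
theorem extension_truncation_isVMatroid {E Γ : Type*} [Fintype E] [AddCommGroup Γ] [LinearOrder Γ] [IsOrderedAddMonoid Γ]
    (r : ℕ) (ν : Finset E → WithTop Γ) (hM : IsVMatroid r ν)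
    (ρ : ℕ) (hρ : ρ ≤ r) :
    IsVMatroid ρ (extν r ν) := by
  constructor
  · obtain ⟨B₀, hB₀, hν⟩ := hM.1
    obtain ⟨B, hBsub, hBcard⟩ := Finset.exists_subset_card_eq (s := B₀) (n := ρ) (by rw [hB₀]; exact hρ)
    refine ⟨B, hBcard, fun h => hν ?_⟩
    have := extν_le (ν := ν) hB₀ hBsub
    rw [h] at this
    exact top_le_iff.mp this
  · exact exch_extν (r := r) (ν := ν) hM.2 (r - ρ) ρ (by omega)
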